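/- Let η = e^{2πi/7} and define the 3×3 matrices à = (i/√7)·[[η²−η⁵, η−η⁶, η⁴−η³],[η−η⁶, η⁴−η³, η²−η⁵],[η⁴−η³, η²−η⁵, η−η⁶]] and B̃ = (i/√7)·[[η³−η⁶, η³−η, η−1],[η²−1, η⁶−η⁵, η⁶−η²],[η⁵−η⁴, η⁴−1, η⁵−η³]]. Then Ã² = 1, B̃³ = 1, and (ÃB̃)⁷ = 1. -/

import Mathlib

open Matrix

noncomputable section

/-- `η = e^{2πi/7}`. -/
def η7 : ℂ := Complex.exp (2 * Real.pi * Complex.I / 7)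

/-- The triplet representation matrix `Ã` of the `PSL(2,7)` generator `A`. -/
def Atilde : Matrix (Fin 3) (Fin 3) ℂ :=
  (Complex.I / (Real.sqrt 7 : ℂ)) •
    !![η7 ^ 2 - η7 ^ 5, η7 - η7 ^ 6, η7 ^ 4 - η7 ^ 3;
       η7 - η7 ^ 6, η7 ^ 4 - η7 ^ 3, η7 ^ 2 - η7 ^ 5;
       η7 ^ 4 - η7 ^ 3, η7 ^ 2 - η7 ^ 5, η7 - η7 ^ 6]

/-- The triplet representation matrix `B̃` of the `PSL(2,7)` generator `B`. -/
def Btilde : Matrix (Fin 3) (Fin 3) ℂ :=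
  (Complex.I / (Real.sqrt 7 : ℂ)) •
    !![η7 ^ 3 - η7 ^ 6, η7 ^ 3 - η7, η7 - 1;
       η7 ^ 2 - 1, η7 ^ 6 - η7 ^ 5, η7 ^ 6 - η7 ^ 2;
       η7 ^ 5 - η7 ^ 4, η7 ^ 4 - 1, η7 ^ 5 - η7 ^ 3]

def EA : Matrix (Fin 3) (Fin 3) ℂ :=
  !![((-2 : ℂ)/7) + ((-1 : ℂ)/7) * η7 ^ 2 + ((2 : ℂ)/7) * η7 ^ 3 + ((2 : ℂ)/7) * η7 ^ 4 + ((-1 : ℂ)/7) * η7 ^ 5, ((-1 : ℂ)/7) + ((3 : ℂ)/7) * η7 ^ 2 + ((1 : ℂ)/7) * η7 ^ 3 + ((1 : ℂ)/7) * η7 ^ 4 + ((3 : ℂ)/7) * η7 ^ 5, ((-4 : ℂ)/7) + ((-2 : ℂ)/7) * η7 ^ 2 + ((-3 : ℂ)/7) * η7 ^ 3 + ((-3 : ℂ)/7) * η7 ^ 4 + ((-2 : ℂ)/7) * η7 ^ 5;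
    ((-1 : ℂ)/7) + ((3 : ℂ)/7) * η7 ^ 2 + ((1 : ℂ)/7) * η7 ^ 3 + ((1 : ℂ)/7) * η7 ^ 4 + ((3 : ℂ)/7) * η7 ^ 5, ((-4 : ℂ)/7) + ((-2 : ℂ)/7) * η7 ^ 2 + ((-3 : ℂ)/7) * η7 ^ 3 + ((-3 : ℂ)/7) * η7 ^ 4 + ((-2 : ℂ)/7) * η7 ^ 5, ((-2 : ℂ)/7) + ((-1 : ℂ)/7) * η7 ^ 2 + ((2 : ℂ)/7) * η7 ^ 3 + ((2 : ℂ)/7) * η7 ^ 4 + ((-1 : ℂ)/7) * η7 ^ 5;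
    ((-4 : ℂ)/7) + ((-2 : ℂ)/7) * η7 ^ 2 + ((-3 : ℂ)/7) * η7 ^ 3 + ((-3 : ℂ)/7) * η7 ^ 4 + ((-2 : ℂ)/7) * η7 ^ 5, ((-2 : ℂ)/7) + ((-1 : ℂ)/7) * η7 ^ 2 + ((2 : ℂ)/7) * η7 ^ 3 + ((2 : ℂ)/7) * η7 ^ 4 + ((-1 : ℂ)/7) * η7 ^ 5, ((-1 : ℂ)/7) + ((3 : ℂ)/7) * η7 ^ 2 + ((1 : ℂ)/7) * η7 ^ 3 + ((1 : ℂ)/7) * η7 ^ 4 + ((3 : ℂ)/7) * η7 ^ 5]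

def EB : Matrix (Fin 3) (Fin 3) ℂ :=
  !![((1 : ℂ)/7) + ((-1 : ℂ)/7) * η7 + ((1 : ℂ)/7) * η7 ^ 2 + ((3 : ℂ)/7) * η7 ^ 4 + ((3 : ℂ)/7) * η7 ^ 5, ((2 : ℂ)/7) + ((-1 : ℂ)/7) * η7 + ((-2 : ℂ)/7) * η7 ^ 2 + ((-1 : ℂ)/7) * η7 ^ 3 + ((2 : ℂ)/7) * η7 ^ 4, ((-1 : ℂ)/7) + ((-1 : ℂ)/7) * η7 + ((2 : ℂ)/7) * η7 ^ 3 + ((-2 : ℂ)/7) * η7 ^ 4 + ((2 : ℂ)/7) * η7 ^ 5;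
    ((-3 : ℂ)/7) + ((-4 : ℂ)/7) * η7 + ((-3 : ℂ)/7) * η7 ^ 2 + ((-2 : ℂ)/7) * η7 ^ 4 + ((-2 : ℂ)/7) * η7 ^ 5, ((1 : ℂ)/7) + ((3 : ℂ)/7) * η7 + ((-1 : ℂ)/7) * η7 ^ 2 + ((3 : ℂ)/7) * η7 ^ 3 + ((1 : ℂ)/7) * η7 ^ 4, ((3 : ℂ)/7) + ((3 : ℂ)/7) * η7 + ((1 : ℂ)/7) * η7 ^ 3 + ((-1 : ℂ)/7) * η7 ^ 4 + ((1 : ℂ)/7) * η7 ^ 5;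
    ((2 : ℂ)/7) + ((-2 : ℂ)/7) * η7 + ((2 : ℂ)/7) * η7 ^ 2 + ((-1 : ℂ)/7) * η7 ^ 4 + ((-1 : ℂ)/7) * η7 ^ 5, ((-3 : ℂ)/7) + ((-2 : ℂ)/7) * η7 + ((-4 : ℂ)/7) * η7 ^ 2 + ((-2 : ℂ)/7) * η7 ^ 3 + ((-3 : ℂ)/7) * η7 ^ 4, ((-2 : ℂ)/7) + ((-2 : ℂ)/7) * η7 + ((-3 : ℂ)/7) * η7 ^ 3 + ((-4 : ℂ)/7) * η7 ^ 4 + ((-3 : ℂ)/7) * η7 ^ 5]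

def EB2 : Matrix (Fin 3) (Fin 3) ℂ :=
  !![((2 : ℂ)/7) + ((1 : ℂ)/7) * η7 + ((4 : ℂ)/7) * η7 ^ 2 + ((4 : ℂ)/7) * η7 ^ 3 + ((1 : ℂ)/7) * η7 ^ 4 + ((2 : ℂ)/7) * η7 ^ 5, ((1 : ℂ)/7) + ((4 : ℂ)/7) * η7 + ((2 : ℂ)/7) * η7 ^ 2 + ((2 : ℂ)/7) * η7 ^ 3 + ((4 : ℂ)/7) * η7 ^ 4 + ((1 : ℂ)/7) * η7 ^ 5, ((4 : ℂ)/7) + ((2 : ℂ)/7) * η7 + ((1 : ℂ)/7) * η7 ^ 2 + ((1 : ℂ)/7) * η7 ^ 3 + ((2 : ℂ)/7) * η7 ^ 4 + ((4 : ℂ)/7) * η7 ^ 5;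
    ((3 : ℂ)/7) + ((1 : ℂ)/7) * η7 + ((1 : ℂ)/7) * η7 ^ 2 + ((3 : ℂ)/7) * η7 ^ 3 + ((-1 : ℂ)/7) * η7 ^ 5, ((-2 : ℂ)/7) + ((-3 : ℂ)/7) * η7 + ((-3 : ℂ)/7) * η7 ^ 2 + ((-2 : ℂ)/7) * η7 ^ 3 + ((-4 : ℂ)/7) * η7 ^ 5, ((-1 : ℂ)/7) + ((2 : ℂ)/7) * η7 + ((2 : ℂ)/7) * η7 ^ 2 + ((-1 : ℂ)/7) * η7 ^ 3 + ((-2 : ℂ)/7) * η7 ^ 5;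
    ((1 : ℂ)/7) * η7 + ((3 : ℂ)/7) * η7 ^ 2 + ((-1 : ℂ)/7) * η7 ^ 3 + ((3 : ℂ)/7) * η7 ^ 4 + ((1 : ℂ)/7) * η7 ^ 5, ((-3 : ℂ)/7) * η7 + ((-2 : ℂ)/7) * η7 ^ 2 + ((-4 : ℂ)/7) * η7 ^ 3 + ((-2 : ℂ)/7) * η7 ^ 4 + ((-3 : ℂ)/7) * η7 ^ 5, ((2 : ℂ)/7) * η7 + ((-1 : ℂ)/7) * η7 ^ 2 + ((-2 : ℂ)/7) * η7 ^ 3 + ((-1 : ℂ)/7) * η7 ^ 4 + ((2 : ℂ)/7) * η7 ^ 5]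

def EC : Matrix (Fin 3) (Fin 3) ℂ :=
  !![(1 : ℂ) * η7, (0 : ℂ), (0 : ℂ);
    (0 : ℂ), (1 : ℂ) * η7 ^ 2, (0 : ℂ);
    (0 : ℂ), (0 : ℂ), (1 : ℂ) * η7 ^ 4]

def EC2 : Matrix (Fin 3) (Fin 3) ℂ :=
  !![(1 : ℂ) * η7 ^ 2, (0 : ℂ), (0 : ℂ);
    (0 : ℂ), (1 : ℂ) * η7 ^ 4, (0 : ℂ);
    (0 : ℂ), (0 : ℂ), (1 : ℂ) * η7]

def EC4 : Matrix (Fin 3) (Fin 3) ℂ :=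
  !![(1 : ℂ) * η7 ^ 4, (0 : ℂ), (0 : ℂ);
    (0 : ℂ), (1 : ℂ) * η7, (0 : ℂ);
    (0 : ℂ), (0 : ℂ), (1 : ℂ) * η7 ^ 2]

def EC6 : Matrix (Fin 3) (Fin 3) ℂ :=
  !![(-1 : ℂ) + (-1 : ℂ) * η7 + (-1 : ℂ) * η7 ^ 2 + (-1 : ℂ) * η7 ^ 3 + (-1 : ℂ) * η7 ^ 4 + (-1 : ℂ) * η7 ^ 5, (0 : ℂ), (0 : ℂ);
    (0 : ℂ), (1 : ℂ) * η7 ^ 5, (0 : ℂ);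
    (0 : ℂ), (0 : ℂ), (1 : ℂ) * η7 ^ 3]

lemma hη : η7 ^ 7 = 1 := by
  rw [η7, ← Complex.exp_nat_mul]
  rw [show (7 : ℕ) * (2 * (Real.pi : ℂ) * Complex.I / 7) = 2 * Real.pi * Complex.I by
    push_cast; ring]
  exact Complex.exp_two_pi_mul_I

lemma hηne : η7 ≠ 1 := by
  rw [η7, Ne, Complex.exp_eq_one_iff]
  rintro ⟨n, hn⟩
  have hπI : 2 * (Real.pi : ℂ) * Complex.I ≠ 0 := by
    simp [Real.pi_ne_zero, Complex.I_ne_zero, Complex.ofReal_ne_zero]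
  have h2 : (2 * (Real.pi : ℂ) * Complex.I) * 1 = (2 * (Real.pi : ℂ) * Complex.I) * ((n : ℂ) * 7) := by
    field_simp at hn
    linear_combination (2 * (Real.pi : ℂ) * Complex.I) * hn
  have h3 : (1 : ℂ) = (n : ℂ) * 7 := mul_left_cancel₀ hπI h2
  have h4 : (1 : ℤ) = n * 7 := by exact_mod_cast h3
  omega

lemma hΦ : 1 + η7 + η7 ^ 2 + η7 ^ 3 + η7 ^ 4 + η7 ^ 5 + η7 ^ 6 = 0 := by
  have hne : η7 - 1 ≠ 0 := sub_ne_zero.mpr hηne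
  have h0 : (η7 - 1) * (1 + η7 + η7 ^ 2 + η7 ^ 3 + η7 ^ 4 + η7 ^ 5 + η7 ^ 6) = 0 := by
    linear_combination hη
  exact (mul_eq_zero.mp h0).resolve_left hne

lemma hg2 : (η7 + η7 ^ 2 + η7 ^ 4 - η7 ^ 3 - η7 ^ 5 - η7 ^ 6) ^ 2 = -7 := by
  linear_combination ((-6 : ℂ) + (1 : ℂ) * η7 + (-1 : ℂ) * η7 ^ 3 + (2 : ℂ) * η7 ^ 4 +
    (1 : ℂ) * η7 ^ 5) * hη + (1 : ℂ) * hΦ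

lemma hηnz : η7 ≠ 0 := by rw [η7]; exact Complex.exp_ne_zero _

lemma hconj : (starRingEnd ℂ) η7 = η7 ^ 6 := by
  have hinv : (starRingEnd ℂ) η7 * η7 = 1 := by
    rw [η7, ← Complex.exp_conj, ← Complex.exp_add]
    rw [show (starRingEnd ℂ) (2 * (Real.pi : ℂ) * Complex.I / 7) +
        2 * (Real.pi : ℂ) * Complex.I / 7 = 0 by
      simp [map_div₀, map_ofNat, Complex.conj_I, Complex.conj_ofReal]; ring]
    exact Complex.exp_zero
  have h2 : (starRingEnd ℂ) η7 * η7 = η7 ^ 6 * η7 := by rw [hinv]; linear_combination - hη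
  exact mul_right_cancel₀ hηnz h2

lemma hg : η7 + η7 ^ 2 + η7 ^ 4 - η7 ^ 3 - η7 ^ 5 - η7 ^ 6 = Complex.I * Real.sqrt 7 := by
  set z : ℂ := η7 + η7 ^ 2 + η7 ^ 4 with hz
  have hconjz : (starRingEnd ℂ) z = η7 ^ 6 + η7 ^ 5 + η7 ^ 3 := by
    rw [hz, map_add, map_add, map_pow, map_pow, hconj]
    linear_combination (η7 ^ 3 + η7 ^ 5 + η7 ^ 10 + η7 ^ 17) * hη
  have hsub : z - (starRingEnd ℂ) z = η7 + η7 ^ 2 + η7 ^ 4 - η7 ^ 3 - η7 ^ 5 - η7 ^ 6 := by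
    rw [hconjz, hz]; ring
  have him : ∀ k : ℕ, (η7 ^ k).im = Real.sin (k * (2 * Real.pi / 7)) := by
    intro k
    have hθ : η7 = Complex.exp (((2 * Real.pi / 7 : ℝ) : ℂ) * Complex.I) := by
      rw [η7]; congr 1; push_cast; ring
    rw [hθ, ← Complex.exp_nat_mul, show (k : ℂ) * (((2 * Real.pi / 7 : ℝ) : ℂ) * Complex.I)
        = ((k * (2 * Real.pi / 7) : ℝ) : ℂ) * Complex.I by push_cast; ring,
      Complex.exp_ofReal_mul_I_im]
  have h1 : η7.im = Real.sin (2 * Real.pi / 7) := by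
    have := him 1; rw [pow_one] at this; rw [this]; norm_num
  have h2 : (η7 ^ 2).im = Real.sin (2 * (2 * Real.pi / 7)) := by
    have := him 2; rw [this]; norm_num
  have h4 : (η7 ^ 4).im = Real.sin (4 * (2 * Real.pi / 7)) := by
    have := him 4; rw [this]; norm_num
  have hzim : z.im = Real.sin (2 * Real.pi / 7) + Real.sin (2 * (2 * Real.pi / 7)) +
      Real.sin (4 * (2 * Real.pi / 7)) := by
    rw [hz]; simp only [Complex.add_im]; rw [h1, h2, h4]
  have hpi := Real.pi_pos
  have hs1 : 0 < Real.sin (2 * Real.pi / 7) :=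
    Real.sin_pos_of_pos_of_lt_pi (by linarith) (by linarith)
  have hs2 : 0 < Real.sin (2 * (2 * Real.pi / 7)) :=
    Real.sin_pos_of_pos_of_lt_pi (by linarith) (by linarith)
  have hs4 : Real.sin (4 * (2 * Real.pi / 7)) = - Real.sin (Real.pi / 7) := by
    rw [show 4 * (2 * Real.pi / 7) = Real.pi / 7 + Real.pi by ring, Real.sin_add_pi]
  have hmono : Real.sin (Real.pi / 7) < Real.sin (2 * Real.pi / 7) := by
    apply Real.strictMonoOn_sin (Set.mem_Icc.mpr ⟨by linarith, by linarith⟩)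
      (Set.mem_Icc.mpr ⟨by linarith, by linarith⟩) (by linarith)
  have hspos : 0 < z.im := by rw [hzim, hs4]; linarith
  have hc2 : (((2 * z.im : ℝ) : ℂ) * Complex.I) ^ 2 = -7 := by
    rw [← Complex.sub_conj, hsub]; exact hg2
  have h4s : ((2 * z.im) ^ 2 : ℝ) = 7 := by
    have h6 : (((2 * z.im) ^ 2 : ℝ) : ℂ) = ((7 : ℝ) : ℂ) := by
      push_cast
      push_cast at hc2
      linear_combination (-1 : ℂ) * hc2 + (4 * (z.im : ℂ) ^ 2) * Complex.I_sq
    exact_mod_cast h6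
  have hsqrt : Real.sqrt 7 = 2 * z.im := by
    rw [← h4s, Real.sqrt_sq (by positivity)]
  rw [← hsub, Complex.sub_conj, hsqrt]
  push_cast; ring

lemma hc : Complex.I / (Real.sqrt 7 : ℂ) = (η7 + η7 ^ 2 + η7 ^ 4 - η7 ^ 3 - η7 ^ 5 - η7 ^ 6) / 7 := by
  rw [hg]
  have h7 : ((Real.sqrt 7 : ℝ) : ℂ) * ((Real.sqrt 7 : ℝ) : ℂ) = 7 := by
    rw [← Complex.ofReal_mul, Real.mul_self_sqrt (by norm_num)]
    norm_num
  have hne : ((Real.sqrt 7 : ℝ) : ℂ) ≠ 0 := Complex.ofReal_ne_zero.mpr (by positivity)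
  rw [div_eq_div_iff hne (by norm_num : (7 : ℂ) ≠ 0)]
  linear_combination (-Complex.I) * h7

set_option maxHeartbeats 2000000 in
lemma hA : Atilde = EA := by
  rw [Atilde, hc]
  ext i j
  fin_cases i <;> fin_cases j <;>
    simp [EA, Matrix.smul_apply, Matrix.vecHead, Matrix.vecTail] <;>
    first
    | ring1
    | (linear_combination (((-2 : ℂ)/7) + ((-1 : ℂ)/7) * η7 ^ 2 + ((1 : ℂ)/7) * η7 ^ 3 + ((1 : ℂ)/7) * η7 ^ 4) * hη)
    | (linear_combination (((-2 : ℂ)/7) + ((-1 : ℂ)/7) * η7 + ((1 : ℂ)/7) * η7 ^ 2 + ((-1 : ℂ)/7) * η7 ^ 3 + ((1 : ℂ)/7) * η7 ^ 4 + ((1 : ℂ)/7) * η7 ^ 5) * hη + (((-1 : ℂ)/7)) * hΦ)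
    | (linear_combination (((-2 : ℂ)/7) + ((2 : ℂ)/7) * η7 + ((-1 : ℂ)/7) * η7 ^ 3) * hη + (((2 : ℂ)/7)) * hΦ)


set_option maxHeartbeats 2000000 in
lemma hB : Btilde = EB := by
  rw [Btilde, hc]
  ext i j
  fin_cases i <;> fin_cases j <;>
    simp [EB, Matrix.smul_apply, Matrix.vecHead, Matrix.vecTail] <;>
    first
    | ring1
    | (linear_combination (((-2 : ℂ)/7) * η7 + ((-1 : ℂ)/7) * η7 ^ 3 + ((1 : ℂ)/7) * η7 ^ 4 + ((1 : ℂ)/7) * η7 ^ 5) * hη + (((-1 : ℂ)/7)) * hΦ)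
    | (linear_combination (((2 : ℂ)/7) + ((-1 : ℂ)/7) * η7 + ((-1 : ℂ)/7) * η7 ^ 2) * hη)
    | (linear_combination (((-1 : ℂ)/7)) * hη)
    | (linear_combination (((-1 : ℂ)/7) + ((-1 : ℂ)/7) * η7) * hη + (((2 : ℂ)/7)) * hΦ)
    | (linear_combination (((2 : ℂ)/7) * η7 + ((-2 : ℂ)/7) * η7 ^ 2 + ((2 : ℂ)/7) * η7 ^ 3 + ((-1 : ℂ)/7) * η7 ^ 5) * hη + (((-1 : ℂ)/7)) * hΦ)
    | (linear_combination (((2 : ℂ)/7) + ((2 : ℂ)/7) * η7 + ((-1 : ℂ)/7) * η7 ^ 2 + ((1 : ℂ)/7) * η7 ^ 3 + ((-1 : ℂ)/7) * η7 ^ 4 + ((-1 : ℂ)/7) * η7 ^ 5) * hη + (((-1 : ℂ)/7)) * hΦ)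
    | (linear_combination (((2 : ℂ)/7) + ((-2 : ℂ)/7) * η7 + ((2 : ℂ)/7) * η7 ^ 2 + ((-1 : ℂ)/7) * η7 ^ 4) * hη)
    | (linear_combination (((-1 : ℂ)/7) + ((1 : ℂ)/7) * η7 + ((-1 : ℂ)/7) * η7 ^ 2 + ((-1 : ℂ)/7) * η7 ^ 3) * hη + (((2 : ℂ)/7)) * hΦ)
    | (linear_combination (((2 : ℂ)/7) * η7 ^ 2 + ((-1 : ℂ)/7) * η7 ^ 3 + ((-1 : ℂ)/7) * η7 ^ 4) * hη + (((2 : ℂ)/7)) * hΦ)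


set_option maxHeartbeats 2000000 in
lemma hAA : EA * EA = 1 := by
  rw [show (1 : Matrix (Fin 3) (Fin 3) ℂ) = !![1,0,0;0,1,0;0,0,1] by rw [← Matrix.one_fin_three]]
  ext i j
  fin_cases i <;> fin_cases j <;>
    simp [EA, Matrix.mul_apply, Fin.sum_univ_three, Matrix.vecHead, Matrix.vecTail] <;>
    first
    | ring1
    | (linear_combination (((8 : ℂ)/7) + ((4 : ℂ)/7) * η7 + ((2 : ℂ)/7) * η7 ^ 2 + ((2 : ℂ)/7) * η7 ^ 3) * hη + (((4 : ℂ)/7)) * hΦ)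
    | (linear_combination (((-4 : ℂ)/7) + ((-2 : ℂ)/7) * η7 + ((-1 : ℂ)/7) * η7 ^ 2 + ((-1 : ℂ)/7) * η7 ^ 3) * hη + (((-2 : ℂ)/7)) * hΦ)


set_option maxHeartbeats 2000000 in
lemma hBB : EB * EB = EB2 := by
  ext i j
  fin_cases i <;> fin_cases j <;>
    simp [EB, EB2, Matrix.mul_apply, Fin.sum_univ_three, Matrix.vecHead, Matrix.vecTail] <;>
    first
    | ring1
    | (linear_combination (((2 : ℂ)/7) + ((1 : ℂ)/7) * η7 + ((2 : ℂ)/7) * η7 ^ 2 + ((1 : ℂ)/7) * η7 ^ 3) * hη + (((-1 : ℂ)/7)) * hΦ)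
    | (linear_combination (((-2 : ℂ)/7) + ((1 : ℂ)/7) * η7) * hη + (((-2 : ℂ)/7)) * hΦ)
    | (linear_combination (((1 : ℂ)/7) + ((-1 : ℂ)/7) * η7) * hη + (((-2 : ℂ)/7)) * hΦ)
    | (linear_combination (((-2 : ℂ)/7) + ((-2 : ℂ)/7) * η7 + ((-2 : ℂ)/7) * η7 ^ 2 + ((-1 : ℂ)/7) * η7 ^ 3) * hη + (((-5 : ℂ)/7)) * hΦ)
    | (linear_combination (((1 : ℂ)/7) + ((-1 : ℂ)/7) * η7 ^ 2) * hη + (((1 : ℂ)/7)) * hΦ)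
    | (linear_combination (((-2 : ℂ)/7) + ((-1 : ℂ)/7) * η7 ^ 3) * hη + (((-1 : ℂ)/7)) * hΦ)
    | (linear_combination (((2 : ℂ)/7) + ((2 : ℂ)/7) * η7 + ((1 : ℂ)/7) * η7 ^ 2) * hη + (((3 : ℂ)/7)) * hΦ)
    | (linear_combination (((3 : ℂ)/7) + ((2 : ℂ)/7) * η7 + ((1 : ℂ)/7) * η7 ^ 2) * hη + (((4 : ℂ)/7)) * hΦ)
    | (linear_combination (((3 : ℂ)/7) + ((5 : ℂ)/7) * η7 + ((3 : ℂ)/7) * η7 ^ 2 + ((1 : ℂ)/7) * η7 ^ 3) * hη + (((2 : ℂ)/7)) * hΦ)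


set_option maxHeartbeats 2000000 in
lemma hBBB : EB2 * EB = 1 := by
  rw [show (1 : Matrix (Fin 3) (Fin 3) ℂ) = !![1,0,0;0,1,0;0,0,1] by rw [← Matrix.one_fin_three]]
  ext i j
  fin_cases i <;> fin_cases j <;>
    simp [EB2, EB, Matrix.mul_apply, Fin.sum_univ_three, Matrix.vecHead, Matrix.vecTail] <;>
    first
    | ring1
    | (linear_combination (((3 : ℂ)/7) + ((-1 : ℂ)/7) * η7 ^ 2) * hη + (((-3 : ℂ)/7)) * hΦ)
    | (linear_combination (((-1 : ℂ)/7) + ((-1 : ℂ)/7) * η7 + ((-1 : ℂ)/7) * η7 ^ 2) * hη + (((-2 : ℂ)/7)) * hΦ)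
    | (linear_combination (((-1 : ℂ)/7) + ((-2 : ℂ)/7) * η7 + ((-3 : ℂ)/7) * η7 ^ 2 + ((-1 : ℂ)/7) * η7 ^ 3) * hη + (((-2 : ℂ)/7)) * hΦ)
    | (linear_combination (((4 : ℂ)/7) + ((2 : ℂ)/7) * η7 + ((1 : ℂ)/7) * η7 ^ 2 + ((1 : ℂ)/7) * η7 ^ 3) * hη + (((5 : ℂ)/7)) * hΦ)
    | (linear_combination (((3 : ℂ)/7) + ((-1 : ℂ)/7) * η7) * hη + (((-3 : ℂ)/7)) * hΦ)
    | (linear_combination (((-1 : ℂ)/7) + ((1 : ℂ)/7) * η7 + ((2 : ℂ)/7) * η7 ^ 2) * hη + (((-2 : ℂ)/7)) * hΦ)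
    | (linear_combination (((5 : ℂ)/7) + ((3 : ℂ)/7) * η7 + ((3 : ℂ)/7) * η7 ^ 2 + ((1 : ℂ)/7) * η7 ^ 3) * hη + (((5 : ℂ)/7)) * hΦ)
    | (linear_combination (((-2 : ℂ)/7) + ((-1 : ℂ)/7) * η7 + ((-1 : ℂ)/7) * η7 ^ 2) * hη + (((-2 : ℂ)/7)) * hΦ)
    | (linear_combination (((4 : ℂ)/7) + ((-1 : ℂ)/7) * η7 + ((-1 : ℂ)/7) * η7 ^ 3) * hη + (((-3 : ℂ)/7)) * hΦ)


set_option maxHeartbeats 2000000 in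
lemma hAB : EA * EB = EC := by
  ext i j
  fin_cases i <;> fin_cases j <;>
    simp [EA, EB, EC, Matrix.mul_apply, Fin.sum_univ_three, Matrix.vecHead, Matrix.vecTail] <;>
    first
    | ring1
    | (linear_combination (((-2 : ℂ)/7) + ((2 : ℂ)/7) * η7 + ((-1 : ℂ)/7) * η7 ^ 3) * hη + (((-3 : ℂ)/7)) * hΦ)
    | (linear_combination (((4 : ℂ)/7) + ((4 : ℂ)/7) * η7 + ((1 : ℂ)/7) * η7 ^ 2) * hη + (((5 : ℂ)/7)) * hΦ)
    | (linear_combination (((4 : ℂ)/7) + ((4 : ℂ)/7) * η7 + ((3 : ℂ)/7) * η7 ^ 2 + ((1 : ℂ)/7) * η7 ^ 3) * hη + (((5 : ℂ)/7)) * hΦ)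
    | (linear_combination (((4 : ℂ)/7) + ((2 : ℂ)/7) * η7 + ((3 : ℂ)/7) * η7 ^ 2 + ((2 : ℂ)/7) * η7 ^ 3) * hη + (((5 : ℂ)/7)) * hΦ)
    | (linear_combination (((-3 : ℂ)/7) + ((-2 : ℂ)/7) * η7 + ((1 : ℂ)/7) * η7 ^ 2) * hη + (((-3 : ℂ)/7)) * hΦ)
    | (linear_combination (((-1 : ℂ)/7) + ((-1 : ℂ)/7) * η7 + ((-1 : ℂ)/7) * η7 ^ 2 + ((1 : ℂ)/7) * η7 ^ 3) * hη + (((-2 : ℂ)/7)) * hΦ)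
    | (linear_combination (((-2 : ℂ)/7) + ((-4 : ℂ)/7) * η7 + ((-3 : ℂ)/7) * η7 ^ 2 + ((-1 : ℂ)/7) * η7 ^ 3) * hη + (((-2 : ℂ)/7)) * hΦ)
    | (linear_combination (((-1 : ℂ)/7) + ((-2 : ℂ)/7) * η7 + ((-2 : ℂ)/7) * η7 ^ 2) * hη + (((-2 : ℂ)/7)) * hΦ)
    | (linear_combination (((-3 : ℂ)/7) + ((-3 : ℂ)/7) * η7 + ((-2 : ℂ)/7) * η7 ^ 2 + ((-2 : ℂ)/7) * η7 ^ 3) * hη + (((-3 : ℂ)/7)) * hΦ)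


set_option maxHeartbeats 2000000 in
lemma hCC : EC * EC = EC2 := by
  ext i j
  fin_cases i <;> fin_cases j <;>
    simp [EC, EC2, Matrix.mul_apply, Fin.sum_univ_three, Matrix.vecHead, Matrix.vecTail] <;>
    first
    | ring1
    | (linear_combination ((1 : ℂ) * η7) * hη)


set_option maxHeartbeats 2000000 in
lemma hC4 : EC2 * EC2 = EC4 := by
  ext i j
  fin_cases i <;> fin_cases j <;>
    simp [EC2, EC4, Matrix.mul_apply, Fin.sum_univ_three, Matrix.vecHead, Matrix.vecTail] <;>
    first
    | ring1
    | (linear_combination ((1 : ℂ) * η7) * hη)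


set_option maxHeartbeats 2000000 in
lemma hC6 : EC4 * EC2 = EC6 := by
  ext i j
  fin_cases i <;> fin_cases j <;>
    simp [EC4, EC2, EC6, Matrix.mul_apply, Fin.sum_univ_three, Matrix.vecHead, Matrix.vecTail] <;>
    first
    | ring1
    | (linear_combination ((1 : ℂ)) * hΦ)


set_option maxHeartbeats 2000000 in
lemma hC7 : EC6 * EC = 1 := by
  rw [show (1 : Matrix (Fin 3) (Fin 3) ℂ) = !![1,0,0;0,1,0;0,0,1] by rw [← Matrix.one_fin_three]]
  ext i j
  fin_cases i <;> fin_cases j <;>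
    simp [EC6, EC, Matrix.mul_apply, Fin.sum_univ_three, Matrix.vecHead, Matrix.vecTail] <;>
    first
    | ring1
    | (linear_combination ((-1 : ℂ)) * hΦ)
    | (linear_combination ((1 : ℂ)) * hη)


/-- The triplet matrices of `PSL(2,7)` satisfy `Ã² = 1`, `B̃³ = 1`, and
`(ÃB̃)⁷ = 1`. -/
theorem stmt14 :
    Atilde ^ 2 = 1 ∧ Btilde ^ 3 = 1 ∧ (Atilde * Btilde) ^ 7 = 1 := by
  refine ⟨?_, ?_, ?_⟩
  · rw [pow_two, hA, hAA]
  · rw [pow_succ, pow_two, hB, hBB, hBBB]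
  · rw [hA, hB, hAB, show (7 : ℕ) = 2 + 2 + 2 + 1 from rfl, pow_add, pow_add, pow_add,
      pow_two, pow_one, hCC, hC4, hC6, hC7]

end
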